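/- Let W ⊆ ℝ be a nonempty compact interval of diameter at most D, and let a, b : [0,∞) → W be measurable with b(σ + c) ≥ a(σ) − δ for all σ ≥ 0, where c > 0 and δ ≥ 0 are constants. If X ~ Exp(η) with η > 0, then E[b(X)] ≥ E[a(X)] − D(1 − exp(−ηc)) − δ, and hence E[b(X)] ≥ E[a(X)] − ηcD − δ. -/

import Mathlib

open MeasureTheory ProbabilityTheory Real

open scoped ENNReal NNReal

open Set in
lemma exp_pdf_integral_aux (η : ℝ) (hη : 0 < η) (f : ℝ → ℝ) :
    ∫ x, f x ∂(expMeasure η) = ∫ x in Ioi 0, f x * (η * exp (-(η * x))) := by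
  have hd : expMeasure η = volume.withDensity
      (fun x => ((exponentialPDFReal η x).toNNReal : ℝ≥0∞)) := rfl
  have hmeas : Measurable (fun x => (exponentialPDFReal η x).toNNReal) :=
    (measurable_exponentialPDFReal η).real_toNNReal
  rw [hd, integral_withDensity_eq_integral_smul hmeas]
  have h1 : (fun x => (exponentialPDFReal η x).toNNReal • f x)
      = fun x => (Ici (0:ℝ)).indicator (fun x => f x * (η * exp (-(η * x)))) x := by
    ext x
    simp only [NNReal.smul_def, Real.coe_toNNReal', exponentialPDFReal, gammaPDFReal]
    by_cases hx : 0 ≤ x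
    · simp only [indicator, mem_Ici, if_pos hx, Real.Gamma_one]
      rw [max_eq_left (by positivity)]
      norm_num; ring
    · simp only [indicator, mem_Ici, if_neg hx]
      norm_num
  rw [h1, integral_indicator measurableSet_Ici, integral_Ici_eq_integral_Ioi]

open Set in
lemma exp_pdf_total_aux (η : ℝ) (hη : 0 < η) (t : ℝ) :
    ∫ x in Ioi t, η * exp (-(η * x)) = exp (-(η * t)) := by
  have h := integral_comp_mul_left_Ioi (fun y => exp (-y)) t hη
  simp only [smul_eq_mul] at h
  rw [integral_const_mul, h, integral_exp_neg_Ioi]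
  field_simp

open Set in
lemma shift_Ioi_aux (g : ℝ → ℝ) (c : ℝ) :
    ∫ x in Ioi c, g x = ∫ x in Ioi 0, g (x + c) := by
  rw [← integral_indicator measurableSet_Ioi, ← integral_indicator measurableSet_Ioi,
    ← integral_add_right_eq_self (fun x => (Ioi c).indicator g x) c]
  congr 1
  ext x
  simp only [indicator, mem_Ioi]
  by_cases hx : 0 < x
  · rw [if_pos (by linarith), if_pos hx]
  · rw [if_neg (by intro h; exact hx (by linarith)), if_neg hx]

open Set in
lemma bdd_mul_pdf_integrable_aux {η : ℝ} (hη : 0 < η) {f : ℝ → ℝ} (hf : Measurable f)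
    {s : Set ℝ} (hs : MeasurableSet s) {M : ℝ} (hM : ∀ x ∈ s, |f x| ≤ M)
    (hps : IntegrableOn (fun x => η * exp (-(η * x))) s) :
    IntegrableOn (fun x => f x * (η * exp (-(η * x)))) s := by
  apply Integrable.mono' (hps.const_mul M)
  · exact (hf.mul ((measurable_id.const_mul η).neg.exp.const_mul η)).aestronglyMeasurable
  · rw [ae_restrict_iff' hs]
    filter_upwards with x hx
    have hp0 : 0 ≤ η * exp (-(η * x)) := by positivity
    rw [Real.norm_eq_abs, abs_mul, abs_of_nonneg hp0]
    exact mul_le_mul_of_nonneg_right (hM x hx) hp0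

theorem stmt_9 (lo hi D : ℝ) (hle : lo ≤ hi) (hD : hi - lo ≤ D)
    (a b : ℝ → ℝ) (ha : Measurable a) (hb : Measurable b)
    (haW : ∀ σ ≥ (0:ℝ), a σ ∈ Set.Icc lo hi) (hbW : ∀ σ ≥ (0:ℝ), b σ ∈ Set.Icc lo hi)
    (c δ : ℝ) (hc : 0 < c) (hδ : 0 ≤ δ)
    (hmono : ∀ σ ≥ (0:ℝ), b (σ + c) ≥ a σ - δ)
    (η : ℝ) (hη : 0 < η) :
    (∫ x, b x ∂(expMeasure η)) ≥ (∫ x, a x ∂(expMeasure η)) - D * (1 - exp (-η * c)) - δ ∧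
    (∫ x, b x ∂(expMeasure η)) ≥ (∫ x, a x ∂(expMeasure η)) - η * c * D - δ := by
  classical
  set p : ℝ → ℝ := fun x => η * exp (-(η * x)) with hp_def
  set M : ℝ := max |lo| |hi| with hM_def
  set E : ℝ := exp (-(η * c)) with hE_def
  have hE0 : 0 < E := exp_pos _
  have hE1 : E ≤ 1 := exp_le_one_iff.2 (by nlinarith)
  have hE_eq : exp (-η * c) = E := by rw [hE_def, neg_mul]
  -- bounds
  have hbdd : ∀ f : ℝ → ℝ, (∀ σ ≥ (0:ℝ), f σ ∈ Set.Icc lo hi) →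
      ∀ x : ℝ, 0 ≤ x → |f x| ≤ M := by
    intro f hfW x hx
    obtain ⟨h1, h2⟩ := hfW x hx
    rw [abs_le]
    constructor
    · have := neg_abs_le lo
      calc -M ≤ -|lo| := by simp [hM_def, le_max_left]
        _ ≤ lo := neg_abs_le lo
        _ ≤ f x := h1
    · calc f x ≤ hi := h2
        _ ≤ |hi| := le_abs_self hi
        _ ≤ M := le_max_right _ _
  -- pdf integrability
  have hp_meas : Measurable p := (measurable_id.const_mul η).neg.exp.const_mul η
  have hp_int : ∀ t : ℝ, IntegrableOn p (Set.Ioi t) := fun t => by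
    simpa only [hp_def, neg_mul, IntegrableOn] using (exp_neg_integrableOn_Ioi t hη).const_mul η
  have hp_int_Ioc : IntegrableOn p (Set.Ioc 0 c) :=
    (hp_int 0).mono_set Set.Ioc_subset_Ioi_self
  have hp_nonneg : ∀ x : ℝ, 0 ≤ p x := fun x => by positivity
  -- integrands' integrability
  have hint_a : IntegrableOn (fun x => a x * p x) (Set.Ioi 0) :=
    bdd_mul_pdf_integrable_aux hη ha measurableSet_Ioi
      (fun x hx => hbdd a haW x (le_of_lt hx)) (hp_int 0)
  have hint_b : ∀ t ≥ (0:ℝ), IntegrableOn (fun x => b x * p x) (Set.Ioi t) :=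
    fun t ht => bdd_mul_pdf_integrable_aux hη hb measurableSet_Ioi
      (fun x hx => hbdd b hbW x (le_trans ht (le_of_lt hx))) (hp_int t)
  have hint_b_Ioc : IntegrableOn (fun x => b x * p x) (Set.Ioc 0 c) :=
    (hint_b 0 le_rfl).mono_set Set.Ioc_subset_Ioi_self
  have hint_bc : IntegrableOn (fun x => b (x + c) * p x) (Set.Ioi 0) :=
    bdd_mul_pdf_integrable_aux hη (hb.comp (measurable_add_const c)) measurableSet_Ioi
      (fun x hx => hbdd b hbW (x + c) (by have := le_of_lt (Set.mem_Ioi.mp hx); linarith)) (hp_int 0)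
  have hint_aδ : IntegrableOn (fun x => (a x - δ) * p x) (Set.Ioi 0) :=
    bdd_mul_pdf_integrable_aux hη (ha.sub measurable_const) measurableSet_Ioi
      (fun x hx => by
        have h1 := hbdd a haW x (le_of_lt hx)
        calc |a x - δ| ≤ |a x| + |δ| := abs_sub _ _
          _ ≤ M + δ := by rw [abs_of_nonneg hδ]; linarith) (hp_int 0)
  -- total masses
  have hJ : ∀ t : ℝ, ∫ x in Set.Ioi t, p x = exp (-(η * t)) := exp_pdf_total_aux η hη
  have hJ0 : ∫ x in Set.Ioi (0:ℝ), p x = 1 := by rw [hJ 0]; simp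
  have hJc : ∫ x in Set.Ioi c, p x = E := hJ c
  -- splitting the domain
  have hsplit : ∀ f : ℝ → ℝ, IntegrableOn f (Set.Ioc 0 c) → IntegrableOn f (Set.Ioi c) →
      ∫ x in Set.Ioi (0:ℝ), f x = (∫ x in Set.Ioc 0 c, f x) + ∫ x in Set.Ioi c, f x := by
    intro f h1 h2
    rw [← Set.Ioc_union_Ioi_eq_Ioi hc.le]
    exact setIntegral_union Set.Ioc_disjoint_Ioi_same measurableSet_Ioi h1 h2
  have hpIoc : ∫ x in Set.Ioc (0:ℝ) c, p x = 1 - E := by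
    have := hsplit p hp_int_Ioc (hp_int c)
    rw [hJ0, hJc] at this
    linarith
  -- lower bound on Ioc part
  have hS1 : ∫ x in Set.Ioc (0:ℝ) c, b x * p x ≥ lo * (1 - E) := by
    have : ∫ x in Set.Ioc (0:ℝ) c, lo * p x ≤ ∫ x in Set.Ioc (0:ℝ) c, b x * p x := by
      apply setIntegral_mono_on (hp_int_Ioc.const_mul lo) hint_b_Ioc measurableSet_Ioc
      intro x hx
      exact mul_le_mul_of_nonneg_right ((hbW x hx.1.le).1) (hp_nonneg x)
    rwa [integral_const_mul, hpIoc] at this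
  -- shift on the Ioi c part
  have hshift : ∫ x in Set.Ioi c, b x * p x
      = (∫ x in Set.Ioi (0:ℝ), b (x + c) * p x) * E := by
    rw [shift_Ioi_aux (fun x => b x * p x) c, ← integral_mul_const]
    apply setIntegral_congr_fun measurableSet_Ioi
    intro x _
    simp only [hp_def]
    rw [show -(η * (x + c)) = -(η * x) + -(η * c) by ring, Real.exp_add]
    ring
  -- comparison after shift
  have hT : ∫ x in Set.Ioi (0:ℝ), b (x + c) * p x
      ≥ (∫ x in Set.Ioi (0:ℝ), a x * p x) - δ := by
    have h1 : ∫ x in Set.Ioi (0:ℝ), (a x - δ) * p x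
        ≤ ∫ x in Set.Ioi (0:ℝ), b (x + c) * p x := by
      apply setIntegral_mono_on hint_aδ hint_bc measurableSet_Ioi
      intro x hx
      exact mul_le_mul_of_nonneg_right (hmono x (le_of_lt hx)) (hp_nonneg x)
    have h2 : ∫ x in Set.Ioi (0:ℝ), (a x - δ) * p x
        = (∫ x in Set.Ioi (0:ℝ), a x * p x) - δ := by
      have : (fun x => (a x - δ) * p x) = fun x => a x * p x - δ * p x := by
        ext x; ring
      rw [this, integral_sub hint_a ((hp_int 0).const_mul δ),
        integral_const_mul, hJ0, mul_one]
    linarith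
  -- upper bound on Ia
  have hIa_hi : ∫ x in Set.Ioi (0:ℝ), a x * p x ≤ hi := by
    have : ∫ x in Set.Ioi (0:ℝ), a x * p x ≤ ∫ x in Set.Ioi (0:ℝ), hi * p x := by
      apply setIntegral_mono_on hint_a ((hp_int 0).const_mul hi) measurableSet_Ioi
      intro x hx
      exact mul_le_mul_of_nonneg_right ((haW x (le_of_lt hx)).2) (hp_nonneg x)
    rwa [integral_const_mul, hJ0, mul_one] at this
  -- convert μ-integrals
  have hIb_eq : ∫ x, b x ∂(expMeasure η) = ∫ x in Set.Ioi (0:ℝ), b x * p x :=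
    exp_pdf_integral_aux η hη b
  have hIa_eq : ∫ x, a x ∂(expMeasure η) = ∫ x in Set.Ioi (0:ℝ), a x * p x :=
    exp_pdf_integral_aux η hη a
  set Ia := ∫ x in Set.Ioi (0:ℝ), a x * p x
  set Ib := ∫ x in Set.Ioi (0:ℝ), b x * p x
  have hmain : Ib ≥ lo * (1 - E) + E * Ia - E * δ := by
    have hsb := hsplit (fun x => b x * p x) hint_b_Ioc (hint_b c hc.le)
    have hS2 : ∫ x in Set.Ioi c, b x * p x ≥ E * (Ia - δ) := by
      rw [hshift]
      calc (∫ x in Set.Ioi (0:ℝ), b (x + c) * p x) * E ≥ (Ia - δ) * E :=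
            mul_le_mul_of_nonneg_right hT hE0.le
        _ = E * (Ia - δ) := by ring
    have : Ib = (∫ x in Set.Ioc (0:ℝ) c, b x * p x) + ∫ x in Set.Ioi c, b x * p x := hsb
    nlinarith [hS1, hS2]
  have hD0 : 0 ≤ D := by linarith
  constructor
  · rw [hIb_eq, hIa_eq, hE_eq]
    nlinarith [mul_nonneg (sub_nonneg.2 hE1) (show (0:ℝ) ≤ lo + D - Ia by linarith),
      mul_nonneg (sub_nonneg.2 hE1) hδ]
  · rw [hIb_eq, hIa_eq]
    have h1mE : 1 - E ≤ η * c := by nlinarith [add_one_le_exp (-(η * c))]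
    nlinarith [mul_le_mul_of_nonneg_left h1mE hD0,
      mul_nonneg (sub_nonneg.2 hE1) (show (0:ℝ) ≤ lo + D - Ia by linarith),
      mul_nonneg (sub_nonneg.2 hE1) hδ]
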